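/- For d = 5, taking the 5-quadratic family with all parameters zero except a₁ yields B(A₁,…,A₅) of rank at most 4; more generally, for d = 5 or d = 6, no choice of family parameters with only one nonzero parameter gives B(A₁,…,A_d) of rank d, but there exist choices with exactly two nonzero parameters achieving rank d (e.g., for d = 6, the pairs (a_i, a_{21−i}) with both nonzero and all others zero give rank 6). -/
import Mathlib

open Matrix

/-- The matrix `B(A₁,…,A₅)` of a 5-quadratic family, in terms of its 10 free
parameters `a₁,…,a₁₀` (here `a 0, …, a 9`). -/
def B5 {K : Type*} [Field K] (a : Fin 10 → K) : Matrix (Fin 5) (Fin 10) K :=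
  !![0, 0, 0, 0, -a 0, -a 1, -a 2, -a 3, -a 4, -a 5;
     0, a 0, a 1, a 2, 0, 0, 0, -a 6, -a 7, -a 8;
     -a 0, 0, a 3, a 4, 0, a 6, a 7, 0, 0, -a 9;
     -a 1, -a 3, 0, a 5, -a 6, 0, a 8, 0, a 9, 0;
     -a 2, -a 4, -a 5, 0, -a 7, -a 8, 0, -a 9, 0, 0]

/-- The matrix `B(A₁,…,A₆)` of a 6-quadratic family, in terms of its 20 free
parameters `a₁,…,a₂₀` (here `a 0, …, a 19`). -/
def B6 {K : Type*} [Field K] (a : Fin 20 → K) : Matrix (Fin 6) (Fin 15) K :=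
  !![0, 0, 0, 0, 0, -a 0, -a 1, -a 2, -a 3, -a 4, -a 5, -a 6, -a 7, -a 8, -a 9;
     0, a 0, a 1, a 2, a 3, 0, 0, 0, 0, -a 10, -a 11, -a 12, -a 13, -a 14, -a 15;
     -a 0, 0, a 4, a 5, a 6, 0, a 10, a 11, a 12, 0, 0, 0, -a 16, -a 17, -a 18;
     -a 1, -a 4, 0, a 7, a 8, -a 10, 0, a 13, a 14, 0, a 16, a 17, 0, 0, -a 19;
     -a 2, -a 5, -a 7, 0, a 9, -a 11, -a 13, 0, a 15, -a 16, 0, a 18, 0, a 19, 0;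
     -a 3, -a 6, -a 8, -a 9, 0, -a 12, -a 14, -a 15, 0, -a 17, -a 18, 0, -a 19, 0, 0]

set_option maxRecDepth 10000
set_option maxHeartbeats 1000000000

namespace Stmt19Aux

variable {α : Type*} {m : ℕ}

@[simp] lemma cv5 (x : α) (u : Fin (m+5) → α) : vecCons x u 5 = u 4 := rfl
@[simp] lemma cv6 (x : α) (u : Fin (m+6) → α) : vecCons x u 6 = u 5 := rfl
@[simp] lemma cv7 (x : α) (u : Fin (m+7) → α) : vecCons x u 7 = u 6 := rfl
@[simp] lemma cv8 (x : α) (u : Fin (m+8) → α) : vecCons x u 8 = u 7 := rfl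
@[simp] lemma cv9 (x : α) (u : Fin (m+9) → α) : vecCons x u 9 = u 8 := rfl
@[simp] lemma cv10 (x : α) (u : Fin (m+10) → α) : vecCons x u 10 = u 9 := rfl
@[simp] lemma cv11 (x : α) (u : Fin (m+11) → α) : vecCons x u 11 = u 10 := rfl
@[simp] lemma cv12 (x : α) (u : Fin (m+12) → α) : vecCons x u 12 = u 11 := rfl
@[simp] lemma cv13 (x : α) (u : Fin (m+13) → α) : vecCons x u 13 = u 12 := rfl
@[simp] lemma cv14 (x : α) (u : Fin (m+14) → α) : vecCons x u 14 = u 13 := rfl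

variable {K : Type*} [Field K]

lemma rank_le_of_row_zero {n m : ℕ} (M : Matrix (Fin (m+1)) (Fin n) K)
    (r : Fin (m+1)) (h : ∀ j, M r j = 0) : M.rank ≤ m := by
  have hle : LinearMap.range M.mulVecLin ≤
      LinearMap.ker (LinearMap.proj r : (Fin (m+1) → K) →ₗ[K] K) := by
    rintro x ⟨v, rfl⟩
    simp [LinearMap.mem_ker, Matrix.mulVecLin_apply, Matrix.mulVec, dotProduct, h]
  have hsurj : Function.Surjective (LinearMap.proj r : (Fin (m+1) → K) →ₗ[K] K) :=
    fun x => ⟨fun _ => x, rfl⟩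
  have hrn := LinearMap.finrank_range_add_finrank_ker
    (LinearMap.proj r : (Fin (m+1) → K) →ₗ[K] K)
  rw [LinearMap.range_eq_top.2 hsurj, finrank_top, Module.finrank_self,
    Module.finrank_pi] at hrn
  simp only [Fintype.card_fin] at hrn
  have hk : Module.finrank K (LinearMap.ker
      (LinearMap.proj r : (Fin (m+1) → K) →ₗ[K] K)) = m := by omega
  calc M.rank ≤ Module.finrank K (LinearMap.ker
      (LinearMap.proj r : (Fin (m+1) → K) →ₗ[K] K)) := Submodule.finrank_mono hle
    _ = m := hk

lemma rank_eq_of_det {d n : ℕ} (M : Matrix (Fin d) (Fin n) K) (f : Fin d → Fin n)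
    (h : (M.submatrix id f).det ≠ 0) : M.rank = d := by
  have h1 : (M.submatrix id f).rank = d := by
    rw [Matrix.rank_of_isUnit _ ((Matrix.isUnit_iff_isUnit_det _).2 h.isUnit),
      Fintype.card_fin]
  have h2 : M.submatrix id f = M * (Matrix.of fun j k => if j = f k then (1:K) else 0) := by
    ext i k
    simp [Matrix.mul_apply, Matrix.submatrix_apply, mul_ite]
  have h3 : (M.submatrix id f).rank ≤ M.rank := by
    rw [h2]; exact Matrix.rank_mul_le_left _ _
  exact le_antisymm (le_trans M.rank_le_card_height (by simp)) (le_trans h1.ge h3)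

lemma det_monomial {n : ℕ} (p q : Fin n → Fin n) (hpq : ∀ i, q (p i) = i)
    (hqp : ∀ i, p (q i) = i) (d : Fin n → K) :
    (Matrix.of fun i j => if j = p i then d i else 0).det =
      (Equiv.Perm.sign ⟨p, q, hpq, hqp⟩ : ℤ) * ∏ i, d i := by
  set σ : Equiv.Perm (Fin n) := ⟨p, q, hpq, hqp⟩ with hσ
  have hco : ∀ i, σ i = p i := fun _ => rfl
  have hsy : ∀ i, σ.symm i = q i := fun _ => rfl
  have key : (Matrix.of fun i j => if j = p i then d i else 0)
      = (Matrix.diagonal fun i => d (σ.symm i)).submatrix σ id := by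
    ext i j
    simp only [Matrix.submatrix_apply, Matrix.of_apply, Matrix.diagonal_apply, id_eq, hco, hsy]
    by_cases h : j = p i
    · subst h; simp [hpq]
    · rw [if_neg h, if_neg (fun hh => h hh.symm)]
  rw [key, Matrix.det_permute, Matrix.det_diagonal, ← Equiv.prod_comp σ.symm d]

lemma units_cast_ne_zero [CharZero K] (u : ℤˣ) : ((u : ℤ) : K) ≠ 0 := by
  rcases Int.units_eq_one_or u with h | h <;> simp [h]

lemma rank_eq_of_monomial [CharZero K] {d n : ℕ} (M : Matrix (Fin d) (Fin n) K)
    (f : Fin d → Fin n) (p q : Fin d → Fin d) (hpq : ∀ i, q (p i) = i)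
    (hqp : ∀ i, p (q i) = i) (dv : Fin d → K) (hd : ∏ i, dv i ≠ 0)
    (key : M.submatrix id f = Matrix.of fun i j => if j = p i then dv i else 0) :
    M.rank = d := by
  apply rank_eq_of_det M f
  rw [key, det_monomial p q hpq hqp dv]
  exact mul_ne_zero (units_cast_ne_zero _) hd

end Stmt19Aux

open Stmt19Aux in
/-- for `d = 5`, the family with all parameters zero except `a₁` gives
`B(A₁,…,A₅)` of rank at most 4; for `d = 5` or `d = 6` no family with only one nonzero
parameter gives `B` of rank `d`, but there are choices with exactly two nonzero
parameters achieving rank `d`: e.g. for `d = 6` the pairs `(aᵢ, a₂₁₋ᵢ)`, both nonzero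
and all other parameters zero, give rank `6`. -/
theorem stmt_19 {K : Type*} [Field K] [CharZero K] :
    -- all parameters zero except a₁ gives rank ≤ 4 for d = 5
    (∀ c : K, (B5 (fun j => if j = 0 then c else 0)).rank ≤ 4) ∧
    -- one nonzero parameter never suffices for d = 5
    (∀ a : Fin 10 → K, (∃ i, ∀ j, j ≠ i → a j = 0) → (B5 a).rank < 5) ∧
    -- one nonzero parameter never suffices for d = 6
    (∀ a : Fin 20 → K, (∃ i, ∀ j, j ≠ i → a j = 0) → (B6 a).rank < 6) ∧
    -- two nonzero parameters can achieve rank 5 for d = 5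
    (∃ a : Fin 10 → K, (∃ i j, i ≠ j ∧ a i ≠ 0 ∧ a j ≠ 0 ∧
        ∀ k, k ≠ i → k ≠ j → a k = 0) ∧ (B5 a).rank = 5) ∧
    -- for d = 6 each pair (aᵢ, a₂₁₋ᵢ), both nonzero, all others zero, gives rank 6
    (∀ (i : Fin 20) (c₁ c₂ : K), c₁ ≠ 0 → c₂ ≠ 0 →
      (B6 (fun j => if j = i then c₁
        else if (j : ℕ) + (i : ℕ) = 19 then c₂ else 0)).rank = 6) := by
  refine ⟨?_, ?_, ?_, ?_, ?_⟩
  · -- part 1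
    intro c
    apply rank_le_of_row_zero _ 3
    intro j
    fin_cases j <;> simp (config := { decide := true }) [B5, Matrix.vecHead, Matrix.vecTail]
  · -- part 2
    rintro a ⟨i, hi⟩
    refine lt_of_le_of_lt (le_trans ?_ (le_refl 4)) (by norm_num)
    fin_cases i
    · apply rank_le_of_row_zero _ 4
      intro j
      fin_cases j <;>
        simp (config := { decide := true }) [B5, Matrix.vecHead, Matrix.vecTail] <;>
        (apply hi; decide)
    · apply rank_le_of_row_zero _ 2
      intro j
      fin_cases j <;>
        simp (config := { decide := true }) [B5, Matrix.vecHead, Matrix.vecTail] <;>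
        (apply hi; decide)
    · apply rank_le_of_row_zero _ 2
      intro j
      fin_cases j <;>
        simp (config := { decide := true }) [B5, Matrix.vecHead, Matrix.vecTail] <;>
        (apply hi; decide)
    · apply rank_le_of_row_zero _ 1
      intro j
      fin_cases j <;>
        simp (config := { decide := true }) [B5, Matrix.vecHead, Matrix.vecTail] <;>
        (apply hi; decide)
    · apply rank_le_of_row_zero _ 1
      intro j
      fin_cases j <;>
        simp (config := { decide := true }) [B5, Matrix.vecHead, Matrix.vecTail] <;>
        (apply hi; decide)
    · apply rank_le_of_row_zero _ 1
      intro j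
      fin_cases j <;>
        simp (config := { decide := true }) [B5, Matrix.vecHead, Matrix.vecTail] <;>
        (apply hi; decide)
    · apply rank_le_of_row_zero _ 0
      intro j
      fin_cases j <;>
        simp (config := { decide := true }) [B5, Matrix.vecHead, Matrix.vecTail] <;>
        (apply hi; decide)
    · apply rank_le_of_row_zero _ 0
      intro j
      fin_cases j <;>
        simp (config := { decide := true }) [B5, Matrix.vecHead, Matrix.vecTail] <;>
        (apply hi; decide)
    · apply rank_le_of_row_zero _ 0
      intro j
      fin_cases j <;>
        simp (config := { decide := true }) [B5, Matrix.vecHead, Matrix.vecTail] <;>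
        (apply hi; decide)
    · apply rank_le_of_row_zero _ 0
      intro j
      fin_cases j <;>
        simp (config := { decide := true }) [B5, Matrix.vecHead, Matrix.vecTail] <;>
        (apply hi; decide)
  · -- part 3
    rintro a ⟨i, hi⟩
    refine lt_of_le_of_lt (le_trans ?_ (le_refl 5)) (by norm_num)
    fin_cases i
    · apply rank_le_of_row_zero _ 5
      intro j
      fin_cases j <;>
        simp (config := { decide := true }) [B6, Matrix.vecHead, Matrix.vecTail] <;>
        (apply hi; decide)
    · apply rank_le_of_row_zero _ 5
      intro j
      fin_cases j <;>
        simp (config := { decide := true }) [B6, Matrix.vecHead, Matrix.vecTail] <;>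
        (apply hi; decide)
    · apply rank_le_of_row_zero _ 5
      intro j
      fin_cases j <;>
        simp (config := { decide := true }) [B6, Matrix.vecHead, Matrix.vecTail] <;>
        (apply hi; decide)
    · apply rank_le_of_row_zero _ 2
      intro j
      fin_cases j <;>
        simp (config := { decide := true }) [B6, Matrix.vecHead, Matrix.vecTail] <;>
        (apply hi; decide)
    · apply rank_le_of_row_zero _ 5
      intro j
      fin_cases j <;>
        simp (config := { decide := true }) [B6, Matrix.vecHead, Matrix.vecTail] <;>
        (apply hi; decide)
    · apply rank_le_of_row_zero _ 5
      intro j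
      fin_cases j <;>
        simp (config := { decide := true }) [B6, Matrix.vecHead, Matrix.vecTail] <;>
        (apply hi; decide)
    · apply rank_le_of_row_zero _ 1
      intro j
      fin_cases j <;>
        simp (config := { decide := true }) [B6, Matrix.vecHead, Matrix.vecTail] <;>
        (apply hi; decide)
    · apply rank_le_of_row_zero _ 5
      intro j
      fin_cases j <;>
        simp (config := { decide := true }) [B6, Matrix.vecHead, Matrix.vecTail] <;>
        (apply hi; decide)
    · apply rank_le_of_row_zero _ 1
      intro j
      fin_cases j <;>
        simp (config := { decide := true }) [B6, Matrix.vecHead, Matrix.vecTail] <;>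
        (apply hi; decide)
    · apply rank_le_of_row_zero _ 1
      intro j
      fin_cases j <;>
        simp (config := { decide := true }) [B6, Matrix.vecHead, Matrix.vecTail] <;>
        (apply hi; decide)
    · apply rank_le_of_row_zero _ 0
      intro j
      fin_cases j <;>
        simp (config := { decide := true }) [B6, Matrix.vecHead, Matrix.vecTail] <;>
        (apply hi; decide)
    · apply rank_le_of_row_zero _ 0
      intro j
      fin_cases j <;>
        simp (config := { decide := true }) [B6, Matrix.vecHead, Matrix.vecTail] <;>
        (apply hi; decide)
    · apply rank_le_of_row_zero _ 0
      intro j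
      fin_cases j <;>
        simp (config := { decide := true }) [B6, Matrix.vecHead, Matrix.vecTail] <;>
        (apply hi; decide)
    · apply rank_le_of_row_zero _ 0
      intro j
      fin_cases j <;>
        simp (config := { decide := true }) [B6, Matrix.vecHead, Matrix.vecTail] <;>
        (apply hi; decide)
    · apply rank_le_of_row_zero _ 0
      intro j
      fin_cases j <;>
        simp (config := { decide := true }) [B6, Matrix.vecHead, Matrix.vecTail] <;>
        (apply hi; decide)
    · apply rank_le_of_row_zero _ 0
      intro j
      fin_cases j <;>
        simp (config := { decide := true }) [B6, Matrix.vecHead, Matrix.vecTail] <;>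
        (apply hi; decide)
    · apply rank_le_of_row_zero _ 0
      intro j
      fin_cases j <;>
        simp (config := { decide := true }) [B6, Matrix.vecHead, Matrix.vecTail] <;>
        (apply hi; decide)
    · apply rank_le_of_row_zero _ 0
      intro j
      fin_cases j <;>
        simp (config := { decide := true }) [B6, Matrix.vecHead, Matrix.vecTail] <;>
        (apply hi; decide)
    · apply rank_le_of_row_zero _ 0
      intro j
      fin_cases j <;>
        simp (config := { decide := true }) [B6, Matrix.vecHead, Matrix.vecTail] <;>
        (apply hi; decide)
    · apply rank_le_of_row_zero _ 0
      intro j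
      fin_cases j <;>
        simp (config := { decide := true }) [B6, Matrix.vecHead, Matrix.vecTail] <;>
        (apply hi; decide)
  · -- part 4
    refine ⟨fun j => if j = 0 then 1 else if j = 9 then 1 else 0,
      ⟨0, 9, by decide, by simp, by simp, fun k h1 h2 => by simp [h1, h2]⟩, ?_⟩
    apply rank_eq_of_monomial _ ![0,1,4,7,8] ![2,1,0,4,3] ![2,1,0,4,3]
      (by decide) (by decide) ![-1,1,-1,1,-1] (by norm_num [Fin.prod_univ_succ])
    ext i j
    fin_cases i <;> fin_cases j <;>
      first
      | rfl
      | simp (config := { decide := true }) [B5, Matrix.vecHead, Matrix.vecTail]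
  · -- part 5
    intro i c₁ c₂ h1 h2
    fin_cases i
    · apply rank_eq_of_monomial _ ![0,1,5,12,13,14] ![2,1,0,5,4,3] ![2,1,0,5,4,3]
        (by decide) (by decide) ![-c₁,c₁,-c₁,-c₂,c₂,-c₂] (by simp [Fin.prod_univ_succ, h1, h2])
      ext i j
      fin_cases i <;> fin_cases j <;>
        first
        | rfl
        | simp (config := { decide := true }) [B6, Matrix.vecHead, Matrix.vecTail]
    · apply rank_eq_of_monomial _ ![0,2,6,10,11,14] ![2,1,5,0,4,3] ![3,1,0,5,4,2]
        (by decide) (by decide) ![-c₁,c₁,-c₂,-c₁,c₂,-c₂] (by simp [Fin.prod_univ_succ, h1, h2])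
      ext i j
      fin_cases i <;> fin_cases j <;>
        first
        | rfl
        | simp (config := { decide := true }) [B6, Matrix.vecHead, Matrix.vecTail]
    · apply rank_eq_of_monomial _ ![0,3,7,9,11,13] ![2,1,5,4,0,3] ![4,1,0,5,3,2]
        (by decide) (by decide) ![-c₁,c₁,-c₂,c₂,-c₁,-c₂] (by simp [Fin.prod_univ_succ, h1, h2])
      ext i j
      fin_cases i <;> fin_cases j <;>
        first
        | rfl
        | simp (config := { decide := true }) [B6, Matrix.vecHead, Matrix.vecTail]
    · apply rank_eq_of_monomial _ ![0,4,8,9,10,12] ![2,1,5,4,3,0] ![5,1,0,4,3,2]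
        (by decide) (by decide) ![-c₁,c₁,-c₂,c₂,-c₂,-c₁] (by simp [Fin.prod_univ_succ, h1, h2])
      ext i j
      fin_cases i <;> fin_cases j <;>
        first
        | rfl
        | simp (config := { decide := true }) [B6, Matrix.vecHead, Matrix.vecTail]
    · apply rank_eq_of_monomial _ ![1,2,7,8,9,14] ![4,5,1,0,3,2] ![3,2,5,4,0,1]
        (by decide) (by decide) ![-c₁,-c₂,c₁,-c₁,c₂,-c₂] (by simp [Fin.prod_univ_succ, h1, h2])
      ext i j
      fin_cases i <;> fin_cases j <;>
        first
        | rfl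
        | simp (config := { decide := true }) [B6, Matrix.vecHead, Matrix.vecTail]
    · apply rank_eq_of_monomial _ ![1,3,6,8,10,13] ![4,5,1,3,0,2] ![4,2,5,3,0,1]
        (by decide) (by decide) ![-c₁,-c₂,c₁,c₂,-c₁,-c₂] (by simp [Fin.prod_univ_succ, h1, h2])
      ext i j
      fin_cases i <;> fin_cases j <;>
        first
        | rfl
        | simp (config := { decide := true }) [B6, Matrix.vecHead, Matrix.vecTail]
    · apply rank_eq_of_monomial _ ![1,4,6,7,11,12] ![4,5,1,3,2,0] ![5,2,4,3,0,1]
        (by decide) (by decide) ![-c₁,-c₂,c₁,c₂,-c₂,-c₁] (by simp [Fin.prod_univ_succ, h1, h2])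
      ext i j
      fin_cases i <;> fin_cases j <;>
        first
        | rfl
        | simp (config := { decide := true }) [B6, Matrix.vecHead, Matrix.vecTail]
    · apply rank_eq_of_monomial _ ![2,3,5,8,11,12] ![5,4,3,1,0,2] ![4,3,5,2,1,0]
        (by decide) (by decide) ![-c₁,-c₂,c₂,c₁,-c₁,-c₂] (by simp [Fin.prod_univ_succ, h1, h2])
      ext i j
      fin_cases i <;> fin_cases j <;>
        first
        | rfl
        | simp (config := { decide := true }) [B6, Matrix.vecHead, Matrix.vecTail]
    · apply rank_eq_of_monomial _ ![2,4,5,7,10,13] ![5,4,3,1,2,0] ![5,3,4,2,1,0]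
        (by decide) (by decide) ![-c₁,-c₂,c₂,c₁,-c₂,-c₁] (by simp [Fin.prod_univ_succ, h1, h2])
      ext i j
      fin_cases i <;> fin_cases j <;>
        first
        | rfl
        | simp (config := { decide := true }) [B6, Matrix.vecHead, Matrix.vecTail]
    · apply rank_eq_of_monomial _ ![3,4,5,6,9,14] ![5,4,3,2,1,0] ![5,4,3,2,1,0]
        (by decide) (by decide) ![-c₁,-c₂,c₂,-c₂,c₁,-c₁] (by simp [Fin.prod_univ_succ, h1, h2])
      ext i j
      fin_cases i <;> fin_cases j <;>
        first
        | rfl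
        | simp (config := { decide := true }) [B6, Matrix.vecHead, Matrix.vecTail]
    · apply rank_eq_of_monomial _ ![3,4,5,6,9,14] ![5,4,3,2,1,0] ![5,4,3,2,1,0]
        (by decide) (by decide) ![-c₂,-c₁,c₁,-c₁,c₂,-c₂] (by simp [Fin.prod_univ_succ, h1, h2])
      ext i j
      fin_cases i <;> fin_cases j <;>
        first
        | rfl
        | simp (config := { decide := true }) [B6, Matrix.vecHead, Matrix.vecTail]
    · apply rank_eq_of_monomial _ ![2,4,5,7,10,13] ![5,4,3,1,2,0] ![5,3,4,2,1,0]
        (by decide) (by decide) ![-c₂,-c₁,c₁,c₂,-c₁,-c₂] (by simp [Fin.prod_univ_succ, h1, h2])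
      ext i j
      fin_cases i <;> fin_cases j <;>
        first
        | rfl
        | simp (config := { decide := true }) [B6, Matrix.vecHead, Matrix.vecTail]
    · apply rank_eq_of_monomial _ ![2,3,5,8,11,12] ![5,4,3,1,0,2] ![4,3,5,2,1,0]
        (by decide) (by decide) ![-c₂,-c₁,c₁,c₂,-c₂,-c₁] (by simp [Fin.prod_univ_succ, h1, h2])
      ext i j
      fin_cases i <;> fin_cases j <;>
        first
        | rfl
        | simp (config := { decide := true }) [B6, Matrix.vecHead, Matrix.vecTail]
    · apply rank_eq_of_monomial _ ![1,4,6,7,11,12] ![4,5,1,3,2,0] ![5,2,4,3,0,1]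
        (by decide) (by decide) ![-c₂,-c₁,c₂,c₁,-c₁,-c₂] (by simp [Fin.prod_univ_succ, h1, h2])
      ext i j
      fin_cases i <;> fin_cases j <;>
        first
        | rfl
        | simp (config := { decide := true }) [B6, Matrix.vecHead, Matrix.vecTail]
    · apply rank_eq_of_monomial _ ![1,3,6,8,10,13] ![4,5,1,3,0,2] ![4,2,5,3,0,1]
        (by decide) (by decide) ![-c₂,-c₁,c₂,c₁,-c₂,-c₁] (by simp [Fin.prod_univ_succ, h1, h2])
      ext i j
      fin_cases i <;> fin_cases j <;>
        first
        | rfl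
        | simp (config := { decide := true }) [B6, Matrix.vecHead, Matrix.vecTail]
    · apply rank_eq_of_monomial _ ![1,2,7,8,9,14] ![4,5,1,0,3,2] ![3,2,5,4,0,1]
        (by decide) (by decide) ![-c₂,-c₁,c₂,-c₂,c₁,-c₁] (by simp [Fin.prod_univ_succ, h1, h2])
      ext i j
      fin_cases i <;> fin_cases j <;>
        first
        | rfl
        | simp (config := { decide := true }) [B6, Matrix.vecHead, Matrix.vecTail]
    · apply rank_eq_of_monomial _ ![0,4,8,9,10,12] ![2,1,5,4,3,0] ![5,1,0,4,3,2]
        (by decide) (by decide) ![-c₂,c₂,-c₁,c₁,-c₁,-c₂] (by simp [Fin.prod_univ_succ, h1, h2])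
      ext i j
      fin_cases i <;> fin_cases j <;>
        first
        | rfl
        | simp (config := { decide := true }) [B6, Matrix.vecHead, Matrix.vecTail]
    · apply rank_eq_of_monomial _ ![0,3,7,9,11,13] ![2,1,5,4,0,3] ![4,1,0,5,3,2]
        (by decide) (by decide) ![-c₂,c₂,-c₁,c₁,-c₂,-c₁] (by simp [Fin.prod_univ_succ, h1, h2])
      ext i j
      fin_cases i <;> fin_cases j <;>
        first
        | rfl
        | simp (config := { decide := true }) [B6, Matrix.vecHead, Matrix.vecTail]
    · apply rank_eq_of_monomial _ ![0,2,6,10,11,14] ![2,1,5,0,4,3] ![3,1,0,5,4,2]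
        (by decide) (by decide) ![-c₂,c₂,-c₁,-c₂,c₁,-c₁] (by simp [Fin.prod_univ_succ, h1, h2])
      ext i j
      fin_cases i <;> fin_cases j <;>
        first
        | rfl
        | simp (config := { decide := true }) [B6, Matrix.vecHead, Matrix.vecTail]
    · apply rank_eq_of_monomial _ ![0,1,5,12,13,14] ![2,1,0,5,4,3] ![2,1,0,5,4,3]
        (by decide) (by decide) ![-c₂,c₂,-c₂,-c₁,c₁,-c₁] (by simp [Fin.prod_univ_succ, h1, h2])
      ext i j
      fin_cases i <;> fin_cases j <;>
        first
        | rfl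
        | simp (config := { decide := true }) [B6, Matrix.vecHead, Matrix.vecTail]
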